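/- For every n ≥ 1 and every profile x ∈ [0,1]^n there exists a facility location y ∈ [0,1] with |y − x_i| ≥ 1/(2n) for all agents i (a 2-IFS solution always exists). Moreover, for every real α with 0 < α < 2 there exist n ≥ 1 and a profile x ∈ [0,1]^n such that no y ∈ [0,1] satisfies |y − x_i| ≥ 1/(αn) for all i. Hence α = 2 is the lowest value of α for which an α-IFS solution always exists. -/

import Mathlib

/-- A 2-IFS solution always exists, and α = 2 is the lowest value of α for which
an α-IFS solution always exists. -/
theorem two_IFS_exists_and_optimal :
    (∀ (n : ℕ) (x : Fin n → ℝ), 1 ≤ n → (∀ i, x i ∈ Set.Icc (0:ℝ) 1) →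
      ∃ y ∈ Set.Icc (0:ℝ) 1, ∀ i, 1 / (2 * n) ≤ |y - x i|) ∧
    (∀ α : ℝ, 0 < α → α < 2 →
      ∃ (n : ℕ) (x : Fin n → ℝ), 1 ≤ n ∧ (∀ i, x i ∈ Set.Icc (0:ℝ) 1) ∧
        ∀ y ∈ Set.Icc (0:ℝ) 1, ∃ i, |y - x i| < 1 / (α * n)) := by
  constructor
  · intro n x hn hx
    have hN : (0:ℝ) < n := by exact_mod_cast hn
    by_contra h
    push_neg at h
    have hf : ∀ k : Fin (n+1), ∃ i : Fin n, |(k.val : ℝ)/n - x i| < 1/(2*n) := by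
      intro k
      refine h ((k.val : ℝ)/n) ⟨by positivity, ?_⟩
      rw [div_le_one hN]
      exact_mod_cast Nat.lt_succ_iff.mp k.isLt
    choose f hf2 using hf
    obtain ⟨k, k', hne, heq⟩ := Fintype.exists_ne_map_eq_of_card_lt f (by simp)
    have d1 := hf2 k
    have d2 := hf2 k'
    rw [heq] at d1
    have htri : |(k.val : ℝ)/n - (k'.val : ℝ)/n| < 1/n := by
      calc |(k.val : ℝ)/n - (k'.val : ℝ)/n|
          ≤ |(k.val : ℝ)/n - x (f k')| + |x (f k') - (k'.val : ℝ)/n| := abs_sub_le _ _ _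
        _ < 1/(2*n) + 1/(2*n) := by
            rw [abs_sub_comm (x (f k'))]
            exact add_lt_add d1 d2
        _ = 1/n := by rw [← add_div]; rw [eq_div_iff (ne_of_gt hN)]; field_simp; norm_num
    have hvne : k.val ≠ k'.val := fun hh => hne (Fin.ext hh)
    have hge : (1:ℝ) ≤ |(k.val : ℝ) - (k'.val : ℝ)| := by
      have hz : ((k.val : ℤ) - (k'.val : ℤ)) ≠ 0 := by
        intro hh; apply hvne; omega
      have h1 : (1:ℤ) ≤ |(k.val : ℤ) - (k'.val : ℤ)| := Int.one_le_abs hz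
      exact_mod_cast h1
    have : (1:ℝ)/n ≤ |(k.val : ℝ)/n - (k'.val : ℝ)/n| := by
      rw [div_sub_div_same, abs_div, abs_of_pos hN, div_le_div_iff₀ hN hN]
      calc (1:ℝ) * n = n := one_mul (n:ℝ)
        _ ≤ |(k.val : ℝ) - (k'.val : ℝ)| * n := le_mul_of_one_le_left hN.le hge
    linarith
  · intro α hα hα2
    refine ⟨1, fun _ => 1/2, le_refl 1, fun _ => ⟨by norm_num, by norm_num⟩, ?_⟩
    intro y hy
    refine ⟨0, ?_⟩
    have h1 : |y - 1/2| ≤ 1/2 := by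
      rw [abs_le]; constructor <;> [linarith [hy.1]; linarith [hy.2]]
    have h2 : (1:ℝ)/2 < 1/(α*1) := by
      rw [mul_one, lt_div_iff₀ hα]
      linarith
    linarith
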